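/- Let ρ_AB be a bipartite state with ρ_A = Σᵢ pᵢ|i⟩⟨i| a spectral decomposition, and let ũ^γ(ρ) = (1−γ)UρU† + γ tr(ρ) I/d_A be a unitary-isotropic channel on A with γ∈[0,1] and U unitary. Then (ũ^γ⊗I_B) applied to Σᵢ(|i⟩⟨i|⊗I)ρ_AB(|i⟩⟨i|⊗I) equals Σᵢ(U|i⟩⟨i|U†⊗I)[(ũ^γ⊗I_B)(ρ_AB)](U|i⟩⟨i|U†⊗I); moreover {U|i⟩⟨i|U†} is an eigenbasis of the reduced state of (ũ^γ⊗I_B)(ρ_AB), with eigenvalues (1−γ)pᵢ+γ/d_A. Hence unitary-isotropic channels commute with the discord destroying map π_A. -/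

import Mathlib

open Matrix
open scoped ComplexOrder Kronecker
set_option maxRecDepth 10000

/-- A density operator (on a Hilbert space indexed by `ι`). -/
def IsDensity {ι : Type*} [Fintype ι] [DecidableEq ι] (ρ : Matrix ι ι ℂ) : Prop :=
  ρ.PosSemidef ∧ ρ.trace = 1

/-- Partial trace over the second factor B. -/
noncomputable def trB {dA dB : ℕ} (ρ : Matrix (Fin dA × Fin dB) (Fin dA × Fin dB) ℂ) :
    Matrix (Fin dA) (Fin dA) ℂ :=
  Matrix.of fun i j => ∑ b, ρ (i, b) (j, b)

/-- Partial trace over the first factor A. -/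
noncomputable def trA {dA dB : ℕ} (ρ : Matrix (Fin dA × Fin dB) (Fin dA × Fin dB) ℂ) :
    Matrix (Fin dB) (Fin dB) ℂ :=
  Matrix.of fun b b' => ∑ a, ρ (a, b) (a, b')

/-- The local measurement map π_A(ρ) = Σᵢ (|i⟩⟨i|⊗I) ρ (|i⟩⟨i|⊗I) in the computational
basis {|i⟩} of A (an eigenbasis of ρ_A). -/
noncomputable def piA {dA dB : ℕ} (ρ : Matrix (Fin dA × Fin dB) (Fin dA × Fin dB) ℂ) :
    Matrix (Fin dA × Fin dB) (Fin dA × Fin dB) ℂ :=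
  Matrix.of fun x y => if x.1 = y.1 then ρ x y else 0

section Aux
variable {dA dB : ℕ}

lemma kron_one_conjT (U : Matrix (Fin dA) (Fin dA) ℂ) :
    (U ⊗ₖ (1 : Matrix (Fin dB) (Fin dB) ℂ))ᴴ = Uᴴ ⊗ₖ (1 : Matrix (Fin dB) (Fin dB) ℂ) := by
  ext ⟨a,b⟩ ⟨c,d⟩
  simp only [conjTranspose_apply, kroneckerMap_apply, Matrix.one_apply]
  split_ifs with h h2 h3 <;> simp_all [eq_comm]

lemma sum_std : (∑ i : Fin dA, single i i (1:ℂ)) = 1 := by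
  ext a b
  by_cases h : a = b
  · subst h; simp [Matrix.sum_apply, Matrix.single, Matrix.one_apply]
  · simp only [Matrix.sum_apply, Matrix.single, Matrix.one_apply, of_apply, h, if_neg]
    rw [Finset.sum_eq_zero]
    · simp [h]
    · intro i _
      by_cases hi : i = a
      · subst hi; simp [h]
      · simp [hi]

lemma sum_kron (f : Fin dA → Matrix (Fin dA) (Fin dA) ℂ)
    (B : Matrix (Fin dB) (Fin dB) ℂ) :
    (∑ i, f i) ⊗ₖ B = ∑ i, f i ⊗ₖ B := by
  ext ⟨a,b⟩ ⟨c,d⟩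
  simp [Matrix.sum_apply, kroneckerMap_apply, Finset.sum_mul]

lemma sandwich (X Y Z W : Matrix (Fin dA) (Fin dA) ℂ)
    (ρ : Matrix (Fin dA × Fin dB) (Fin dA × Fin dB) ℂ) :
    (X ⊗ₖ (1 : Matrix (Fin dB) (Fin dB) ℂ)) * ((Y ⊗ₖ (1 : Matrix (Fin dB) (Fin dB) ℂ)) * ρ *
        (Z ⊗ₖ (1 : Matrix (Fin dB) (Fin dB) ℂ))) * (W ⊗ₖ (1 : Matrix (Fin dB) (Fin dB) ℂ)) =
    ((X * Y) ⊗ₖ (1 : Matrix (Fin dB) (Fin dB) ℂ)) * ρ *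
      ((Z * W) ⊗ₖ (1 : Matrix (Fin dB) (Fin dB) ℂ)) := by
  calc (X ⊗ₖ (1 : Matrix (Fin dB) (Fin dB) ℂ)) * ((Y ⊗ₖ (1 : Matrix (Fin dB) (Fin dB) ℂ)) * ρ *
        (Z ⊗ₖ (1 : Matrix (Fin dB) (Fin dB) ℂ))) * (W ⊗ₖ (1 : Matrix (Fin dB) (Fin dB) ℂ))
      = ((X ⊗ₖ (1 : Matrix (Fin dB) (Fin dB) ℂ)) * (Y ⊗ₖ (1 : Matrix (Fin dB) (Fin dB) ℂ))) * ρ *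
        ((Z ⊗ₖ (1 : Matrix (Fin dB) (Fin dB) ℂ)) * (W ⊗ₖ (1 : Matrix (Fin dB) (Fin dB) ℂ))) := by
        noncomm_ring
    _ = _ := by
        rw [← Matrix.mul_kronecker_mul, ← Matrix.mul_kronecker_mul, Matrix.mul_one]

lemma conj_std (ρ : Matrix (Fin dA × Fin dB) (Fin dA × Fin dB) ℂ) (i : Fin dA) :
    (single i i (1:ℂ) ⊗ₖ (1 : Matrix (Fin dB) (Fin dB) ℂ)) * ρ *
      (single i i (1:ℂ) ⊗ₖ (1 : Matrix (Fin dB) (Fin dB) ℂ)) =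
    Matrix.of fun x y => if x.1 = i ∧ y.1 = i then ρ x y else 0 := by
  ext ⟨a,b⟩ ⟨c,d⟩
  simp only [mul_apply, Fintype.sum_prod_type, kroneckerMap_apply, Matrix.single, of_apply,
    Matrix.one_apply, ite_and, mul_ite, ite_mul, mul_zero, zero_mul, mul_one, one_mul,
    Finset.sum_ite_eq, Finset.sum_ite_eq', Finset.mem_univ, if_true,
    Finset.sum_const_zero]
  by_cases h1 : i = a
  · by_cases h2 : i = c
    · subst h1; subst h2; simp [Finset.sum_ite_eq]
    · subst h1
      simp only [Matrix.sum_apply]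
      simp only [h2, if_false]
      exact (if_neg (fun hh : c = i => h2 hh.symm)).symm
  · simp [h1, Ne.symm h1]

lemma piA_eq_sum (ρ : Matrix (Fin dA × Fin dB) (Fin dA × Fin dB) ℂ) :
    (∑ i, (single i i (1:ℂ) ⊗ₖ (1 : Matrix (Fin dB) (Fin dB) ℂ)) * ρ *
      (single i i (1:ℂ) ⊗ₖ (1 : Matrix (Fin dB) (Fin dB) ℂ))) = piA ρ := by
  simp only [conj_std]
  ext ⟨a,b⟩ ⟨c,d⟩
  by_cases h : a = c
  · subst h
    simp [Matrix.sum_apply, piA, Finset.sum_ite_eq']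
  · simp only [Matrix.sum_apply, piA, of_apply, h, if_false]
    refine Finset.sum_eq_zero fun i _ => ?_
    rw [if_neg]
    rintro ⟨h1, h2⟩
    exact h (h1.trans h2.symm)

lemma trA_piA (ρ : Matrix (Fin dA × Fin dB) (Fin dA × Fin dB) ℂ) : trA (piA ρ) = trA ρ := by
  ext b b'
  simp [trA, piA]

lemma trace_trA (ρ : Matrix (Fin dA × Fin dB) (Fin dA × Fin dB) ℂ) :
    (trA ρ).trace = ρ.trace := by
  simp only [trace, trA, diag, of_apply, Fintype.sum_prod_type]
  exact Finset.sum_comm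

lemma trB_add (M N : Matrix (Fin dA × Fin dB) (Fin dA × Fin dB) ℂ) :
    trB (M + N) = trB M + trB N := by
  ext i j; simp [trB, Finset.sum_add_distrib]

lemma trB_smul (x : ℂ) (M : Matrix (Fin dA × Fin dB) (Fin dA × Fin dB) ℂ) :
    trB (x • M) = x • trB M := by
  ext i j; simp [trB, Finset.mul_sum]

lemma trB_kron (A : Matrix (Fin dA) (Fin dA) ℂ) (B : Matrix (Fin dB) (Fin dB) ℂ) :
    trB (A ⊗ₖ B) = B.trace • A := by
  ext i j; simp [trB, trace, diag, ← Finset.mul_sum, mul_comm]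

lemma trB_conj (U V : Matrix (Fin dA) (Fin dA) ℂ)
    (M : Matrix (Fin dA × Fin dB) (Fin dA × Fin dB) ℂ) :
    trB ((U ⊗ₖ (1 : Matrix (Fin dB) (Fin dB) ℂ)) * M *
        (V ⊗ₖ (1 : Matrix (Fin dB) (Fin dB) ℂ))) = U * trB M * V := by
  ext i j
  simp only [trB, of_apply, mul_apply, Fintype.sum_prod_type, kroneckerMap_apply,
    Matrix.one_apply, mul_ite, ite_mul, mul_zero, zero_mul, mul_one, one_mul,
    Finset.sum_ite_eq, Finset.sum_ite_eq', Finset.mem_univ, if_true,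
    Finset.sum_mul, Finset.mul_sum]
  rw [Finset.sum_comm]
  refine Finset.sum_congr rfl fun k _ => Finset.sum_comm

end Aux

/-- Unitary-isotropic channels commute with the discord destroying map π_A:
(ũ^γ⊗I)(π_A(ρ_AB)) equals the projection of (ũ^γ⊗I)(ρ_AB) onto the rotated basis
{U|i⟩⟨i|U†⊗I}, and {U|i⟩⟨i|U†} is an eigenbasis of the new reduced state with
eigenvalues (1−γ)pᵢ + γ/d_A. -/
theorem unitary_isotropic_commutes_with_piA {dA dB : ℕ} [NeZero dA] [NeZero dB]
    (ρAB : Matrix (Fin dA × Fin dB) (Fin dA × Fin dB) ℂ)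
    (hρ : IsDensity ρAB)
    (p : Fin dA → ℝ)
    (hspec : trB ρAB = Matrix.diagonal fun i => (p i : ℂ))
    (γ : ℝ) (hγ0 : 0 ≤ γ) (hγ1 : γ ≤ 1)
    (U : Matrix (Fin dA) (Fin dA) ℂ) (hU : U * Uᴴ = 1 ∧ Uᴴ * U = 1)
    -- the unitary-isotropic channel acting locally on A:
    (Ephi : Matrix (Fin dA × Fin dB) (Fin dA × Fin dB) ℂ →
        Matrix (Fin dA × Fin dB) (Fin dA × Fin dB) ℂ)
    (hEphi : ∀ M, Ephi M =
      ((1 - γ : ℝ) : ℂ) • ((U ⊗ₖ (1 : Matrix (Fin dB) (Fin dB) ℂ)) * M *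
          (U ⊗ₖ (1 : Matrix (Fin dB) (Fin dB) ℂ))ᴴ) +
        ((γ / dA : ℝ) : ℂ) • ((1 : Matrix (Fin dA) (Fin dA) ℂ) ⊗ₖ trA M)) :
    Ephi (piA ρAB) =
      (∑ i, ((U * single i i (1 : ℂ) * Uᴴ) ⊗ₖ (1 : Matrix (Fin dB) (Fin dB) ℂ)) *
        Ephi ρAB *
        ((U * single i i (1 : ℂ) * Uᴴ) ⊗ₖ (1 : Matrix (Fin dB) (Fin dB) ℂ))) ∧
    trB (Ephi ρAB) =
      U * Matrix.diagonal (fun i => (((1 - γ) * p i + γ / dA : ℝ) : ℂ)) * Uᴴ := by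
  obtain ⟨hU1, hU2⟩ := hU
  set D : Fin dA → Matrix (Fin dA) (Fin dA) ℂ := fun i => single i i (1:ℂ) with hD
  have hDD : ∀ i, D i * D i = D i := fun i => by
    simp [hD, Matrix.single_mul_single_same]
  have hPU : ∀ i, (U * D i * Uᴴ) * U = U * D i := fun i => by
    rw [Matrix.mul_assoc, hU2, Matrix.mul_one]
  have hUP : ∀ i, Uᴴ * (U * D i * Uᴴ) = D i * Uᴴ := fun i => by
    rw [← Matrix.mul_assoc, ← Matrix.mul_assoc, hU2, Matrix.one_mul]
  have hPP : ∀ i, (U * D i * Uᴴ) * (U * D i * Uᴴ) = U * D i * Uᴴ := fun i => by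
    rw [Matrix.mul_assoc (U * D i) Uᴴ (U * D i * Uᴴ), hUP,
      ← Matrix.mul_assoc (U * D i) (D i) Uᴴ, Matrix.mul_assoc U (D i) (D i), hDD]
  constructor
  · rw [hEphi, hEphi, kron_one_conjT]
    have expand : ∀ i : Fin dA,
        ((U * D i * Uᴴ) ⊗ₖ (1 : Matrix (Fin dB) (Fin dB) ℂ)) *
          (((1 - γ : ℝ) : ℂ) • ((U ⊗ₖ (1 : Matrix (Fin dB) (Fin dB) ℂ)) * ρAB *
              (Uᴴ ⊗ₖ (1 : Matrix (Fin dB) (Fin dB) ℂ))) +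
            ((γ / dA : ℝ) : ℂ) • ((1 : Matrix (Fin dA) (Fin dA) ℂ) ⊗ₖ trA ρAB)) *
          ((U * D i * Uᴴ) ⊗ₖ (1 : Matrix (Fin dB) (Fin dB) ℂ)) =
        ((1 - γ : ℝ) : ℂ) • ((U ⊗ₖ (1 : Matrix (Fin dB) (Fin dB) ℂ)) *
            ((D i ⊗ₖ (1 : Matrix (Fin dB) (Fin dB) ℂ)) * ρAB *
              (D i ⊗ₖ (1 : Matrix (Fin dB) (Fin dB) ℂ))) *
            (Uᴴ ⊗ₖ (1 : Matrix (Fin dB) (Fin dB) ℂ))) +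
          ((γ / dA : ℝ) : ℂ) • ((U * D i * Uᴴ) ⊗ₖ trA ρAB) := by
      intro i
      rw [Matrix.mul_add, Matrix.add_mul, mul_smul_comm, smul_mul_assoc,
        mul_smul_comm, smul_mul_assoc]
      congr 1
      · rw [sandwich, sandwich, hPU, hUP]
      · rw [← Matrix.mul_kronecker_mul, ← Matrix.mul_kronecker_mul]
        simp only [Matrix.mul_one, Matrix.one_mul]
        rw [hPP]
    rw [Finset.sum_congr rfl (fun i (_ : i ∈ Finset.univ) => expand i)]
    rw [Finset.sum_add_distrib, ← Finset.smul_sum, ← Finset.smul_sum]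
    congr 1
    · rw [← Finset.sum_mul, ← Finset.mul_sum, piA_eq_sum]
    · rw [trA_piA, ← sum_kron, ← Finset.sum_mul, ← Finset.mul_sum, hD, sum_std,
        Matrix.mul_one, hU1]
  · rw [hEphi, kron_one_conjT, trB_add, trB_smul, trB_smul, trB_conj, trB_kron,
      trace_trA, hρ.2, hspec]
    have hdiag : (Matrix.diagonal fun i => (((1 - γ) * p i + γ / dA : ℝ) : ℂ)) =
        ((1 - γ : ℝ) : ℂ) • Matrix.diagonal (fun i => (p i : ℂ)) +
          ((γ / dA : ℝ) : ℂ) • (1 : Matrix (Fin dA) (Fin dA) ℂ) := by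
      ext i j
      rcases eq_or_ne i j with rfl | h
      · simp only [Matrix.diagonal_apply_eq, Matrix.add_apply, Matrix.smul_apply,
          Matrix.one_apply_eq, smul_eq_mul, mul_one]
        push_cast
        ring
      · simp [Matrix.diagonal_apply_ne _ h, Matrix.one_apply_ne h]
    rw [hdiag, Matrix.mul_add, Matrix.add_mul, mul_smul_comm, smul_mul_assoc,
      mul_smul_comm, smul_mul_assoc, Matrix.mul_one, hU1, one_smul]
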